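/- arXiv:2203.12251 — 3 statements merged into one kernel-verified Lean document; each statement's English description precedes it below -/
import Mathlib

section
/- Let (X,T) be a TDS with metric d and μ a Borel probability measure on X (not necessarily invariant). Then for every ε > 0, the lower Brin–Katok ε-entropy satisfies h̲_μ^{BK}(T, ε) ≤ M_μ(T, d, ε/2), where M_μ(T,d,ε/2) is the Katok-type Bowen (Carathéodory–Pesin) ε-entropy of μ. -/
open MeasureTheory Filter Set Metric Topology ENNReal

variable {X : Type*} [MetricSpace X]

/-- The `n`-th Bowen metric `d_n(x,y) = max_{0 ≤ j ≤ n-1} d(T^j x, T^j y)`. -/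
noncomputable def bowenDist (T : X → X) (n : ℕ) (x y : X) : ℝ :=
  ⨆ j ∈ Finset.range n, dist (T^[j] x) (T^[j] y)

/-- The open Bowen ball of order `n` and radius `ε`. -/
def bowenBall (T : X → X) (n : ℕ) (x : X) (ε : ℝ) : Set X :=
  {y | bowenDist T n x y < ε}

/-- The closed Bowen ball of order `n` and radius `ε`. -/
def bowenClosedBall (T : X → X) (n : ℕ) (x : X) (ε : ℝ) : Set X :=
  {y | bowenDist T n x y ≤ ε}

/-- `F` is `(n,ε)`-separated. -/
def IsBowenSeparated (T : X → X) (n : ℕ) (ε : ℝ) (F : Set X) : Prop :=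
  ∀ x ∈ F, ∀ y ∈ F, x ≠ y → ε < bowenDist T n x y

/-- Maximal cardinality of an `(n,ε)`-separated subset of `Z`. -/
noncomputable def sepNum (T : X → X) (n : ℕ) (ε : ℝ) (Z : Set X) : ℕ :=
  sSup {k | ∃ F : Finset X, ↑F ⊆ Z ∧ IsBowenSeparated T n ε ↑F ∧ F.card = k}

/-- A finite Borel measurable partition of `X`. -/
def IsMeasPartition [MeasurableSpace X] (P : Finset (Set X)) : Prop :=
  (∀ A ∈ P, MeasurableSet A) ∧ (∀ A ∈ P, ∀ B ∈ P, A ≠ B → Disjoint A B) ∧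
    (⋃ A ∈ P, A) = Set.univ

/-- A finite open cover of `X`. -/
def IsOpenCover (U : Finset (Set X)) : Prop :=
  (∀ A ∈ U, IsOpen A) ∧ (⋃ A ∈ U, A) = Set.univ

/-- The `n`-th join `⋁_{j=0}^{n-1} T^{-j} P` of a finite family of sets. -/
noncomputable def joinPart (T : X → X) (P : Finset (Set X)) (n : ℕ) : Finset (Set X) := by
  classical
  exact (Fintype.piFinset (fun _ : Fin n => P)).image
    (fun f => ⋂ j : Fin n, T^[(j : ℕ)] ⁻¹' f j)

/-- Static entropy of a finite partition. -/
noncomputable def partEntropy [MeasurableSpace X] (μ : Measure X) (P : Finset (Set X)) : ℝ :=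
  ∑ A ∈ P, Real.negMulLog (μ A).toReal

/-- Kolmogorov–Sinai entropy of `T` w.r.t. the partition `P`. -/
noncomputable def ksEntropyPart [MeasurableSpace X] (T : X → X) (μ : Measure X)
    (P : Finset (Set X)) : ℝ :=
  limsup (fun n => partEntropy μ (joinPart T P n) / n) atTop

/-- Kolmogorov–Sinai entropy of `(X,T,μ)`. -/
noncomputable def ksEntropy [MeasurableSpace X] (T : X → X) (μ : Measure X) : ℝ≥0∞ :=
  ⨆ (P : Finset (Set X)) (_ : IsMeasPartition P), ENNReal.ofReal (ksEntropyPart T μ P)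

/-- `N_μ(V, c)`: the minimal cardinality of a subfamily of `V` whose union has
measure at least `c`. -/
noncomputable def coverNum [MeasurableSpace X] (μ : Measure X) (V : Finset (Set X)) (c : ℝ) : ℕ :=
  sInf {k | ∃ W : Finset (Set X), W ⊆ V ∧ W.card = k ∧ ENNReal.ofReal c ≤ μ (⋃ A ∈ W, A)}

/-- Shapira's entropy of the open cover `U` at level `δ`. -/
noncomputable def shapiraEnt [MeasurableSpace X] (T : X → X) (μ : Measure X)
    (U : Finset (Set X)) (δ : ℝ) : ℝ :=
  limsup (fun n => Real.log (coverNum μ (joinPart T U n) δ) / n) atTop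

/-- `R_μ^δ(T,n,ε)`: minimal number of Bowen `(n,ε)`-balls whose union has measure `> 1 - δ`. -/
noncomputable def katokCovNum [MeasurableSpace X] (T : X → X) (μ : Measure X) (n : ℕ)
    (ε δ : ℝ) : ℕ :=
  sInf {k | ∃ E : Finset X, E.card = k ∧
    1 - ENNReal.ofReal δ < μ (⋃ x ∈ E, bowenBall T n x ε)}

/-- Upper Katok `ε`-entropy at level `δ`. -/
noncomputable def katokUpperδ [MeasurableSpace X] (T : X → X) (μ : Measure X) (ε δ : ℝ) : ℝ≥0∞ :=
  limsup (fun n => ENNReal.ofReal (Real.log (katokCovNum T μ n ε δ)) / n) atTop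

/-- Lower Katok `ε`-entropy at level `δ`. -/
noncomputable def katokLowerδ [MeasurableSpace X] (T : X → X) (μ : Measure X) (ε δ : ℝ) : ℝ≥0∞ :=
  liminf (fun n => ENNReal.ofReal (Real.log (katokCovNum T μ n ε δ)) / n) atTop

/-- Upper Katok `ε`-entropy: the limit of `katokUpperδ` as `δ → 0`. -/
noncomputable def katokUpper [MeasurableSpace X] (T : X → X) (μ : Measure X) (ε : ℝ) : ℝ≥0∞ :=
  ⨆ δ ∈ Set.Ioo (0 : ℝ) 1, katokUpperδ T μ ε δ

/-- Lower Katok `ε`-entropy: the limit of `katokLowerδ` as `δ → 0`. -/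
noncomputable def katokLower [MeasurableSpace X] (T : X → X) (μ : Measure X) (ε : ℝ) : ℝ≥0∞ :=
  ⨆ δ ∈ Set.Ioo (0 : ℝ) 1, katokLowerδ T μ ε δ

/-- `-log μ(S)`, as an extended nonnegative real (`∞` when `μ S = 0`). -/
noncomputable def negLogMeas [MeasurableSpace X] (μ : Measure X) (S : Set X) : ℝ≥0∞ :=
  if μ S = 0 then ⊤ else ENNReal.ofReal (-Real.log (μ S).toReal)

/-- Upper Brin–Katok local `ε`-entropy of `μ`. -/
noncomputable def bkUpper [MeasurableSpace X] (T : X → X) (μ : Measure X) (ε : ℝ) : ℝ≥0∞ :=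
  ∫⁻ x, limsup (fun n => negLogMeas μ (bowenBall T n x ε) / n) atTop ∂μ

/-- Lower Brin–Katok local `ε`-entropy of `μ`. -/
noncomputable def bkLower [MeasurableSpace X] (T : X → X) (μ : Measure X) (ε : ℝ) : ℝ≥0∞ :=
  ∫⁻ x, liminf (fun n => negLogMeas μ (bowenBall T n x ε) / n) atTop ∂μ

/-- `∑ e^{-s n_i}` over a family of (center, order) pairs. -/
noncomputable def weightSum (s : ℝ) (I : Set (X × ℕ)) : ℝ≥0∞ :=
  ∑' p : I, ENNReal.ofReal (Real.exp (-(s * ((p : X × ℕ).2 : ℝ))))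

/-- Carathéodory–Pesin Bowen pre-measure `M(T,d,Z,s,N,ε)`. -/
noncomputable def bowenPre (T : X → X) (Z : Set X) (s : ℝ) (N : ℕ) (ε : ℝ) : ℝ≥0∞ :=
  ⨅ (I : Set (X × ℕ)) (_ : I.Countable ∧ (∀ p ∈ I, N ≤ p.2) ∧
      Z ⊆ ⋃ p ∈ I, bowenBall T p.2 p.1 ε), weightSum s I

/-- `M(T,d,Z,s,ε) = lim_{N→∞} M(T,d,Z,s,N,ε)`. -/
noncomputable def bowenCP (T : X → X) (Z : Set X) (s : ℝ) (ε : ℝ) : ℝ≥0∞ :=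
  ⨆ N, bowenPre T Z s N ε

/-- Bowen `ε`-entropy of the subset `Z`: the critical value of `s ↦ M(T,d,Z,s,ε)`. -/
noncomputable def bowenEnt (T : X → X) (Z : Set X) (ε : ℝ) : ℝ≥0∞ :=
  sInf {a : ℝ≥0∞ | ∃ s : ℝ, 0 ≤ s ∧ a = ENNReal.ofReal s ∧ bowenCP T Z s ε = 0}

/-- Packing pre-measure `P(T,d,Z,s,N,ε)`: supremum of `∑ e^{-n_i s}` over pairwise disjoint
families of closed Bowen balls with centers in `Z` and orders `≥ N`. -/
noncomputable def packPre (T : X → X) (Z : Set X) (s : ℝ) (N : ℕ) (ε : ℝ) : ℝ≥0∞ :=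
  ⨆ (I : Set (X × ℕ)) (_ : I.Countable ∧ (∀ p ∈ I, N ≤ p.2 ∧ p.1 ∈ Z) ∧
      I.PairwiseDisjoint (fun p => bowenClosedBall T p.2 p.1 ε)), weightSum s I

/-- `P(T,d,Z,s,ε) = lim_{N→∞} P(T,d,Z,s,N,ε)`. -/
noncomputable def packCP (T : X → X) (Z : Set X) (s : ℝ) (ε : ℝ) : ℝ≥0∞ :=
  ⨅ N, packPre T Z s N ε

/-- `𝒫(T,d,Z,s,ε) = inf {∑_i P(T,d,Z_i,s,ε) : Z ⊆ ⋃ Z_i}`. -/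
noncomputable def packOuter (T : X → X) (Z : Set X) (s : ℝ) (ε : ℝ) : ℝ≥0∞ :=
  ⨅ (Zs : ℕ → Set X) (_ : Z ⊆ ⋃ i, Zs i), ∑' i, packCP T (Zs i) s ε

/-- Packing `ε`-entropy of the subset `Z`: critical value of `s ↦ 𝒫(T,d,Z,s,ε)`. -/
noncomputable def packEnt (T : X → X) (Z : Set X) (ε : ℝ) : ℝ≥0∞ :=
  sInf {a : ℝ≥0∞ | ∃ s : ℝ, 0 ≤ s ∧ a = ENNReal.ofReal s ∧ packOuter T Z s ε = 0}

/-- Packing topological entropy of a subset: `lim_{ε → 0} h_top^P(T,Z,d,ε)`. -/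
noncomputable def packEntTotal (T : X → X) (Z : Set X) : ℝ≥0∞ :=
  ⨆ (ε : ℝ) (_ : 0 < ε), packEnt T Z ε

/-- Katok-type Bowen pre-measure `M^δ(T,d,μ,s,N,ε)` for a measure `μ`. -/
noncomputable def bowenPreMeas [MeasurableSpace X] (T : X → X) (μ : Measure X) (s : ℝ)
    (N : ℕ) (ε δ : ℝ) : ℝ≥0∞ :=
  ⨅ (I : Set (X × ℕ)) (_ : I.Countable ∧ (∀ p ∈ I, N ≤ p.2) ∧
      1 - ENNReal.ofReal δ < μ (⋃ p ∈ I, bowenBall T p.2 p.1 ε)), weightSum s I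

/-- The critical value `M^δ(T,d,μ,ε)`. -/
noncomputable def bowenEntMeasδ [MeasurableSpace X] (T : X → X) (μ : Measure X)
    (ε δ : ℝ) : ℝ≥0∞ :=
  sInf {a : ℝ≥0∞ | ∃ s : ℝ, 0 ≤ s ∧ a = ENNReal.ofReal s ∧
    (⨆ N, bowenPreMeas T μ s N ε δ) = 0}

/-- `M_μ(T,d,ε) = lim_{δ → 0} M^δ(T,d,μ,ε)`. -/
noncomputable def bowenEntMeas [MeasurableSpace X] (T : X → X) (μ : Measure X) (ε : ℝ) : ℝ≥0∞ :=
  ⨆ δ ∈ Set.Ioo (0 : ℝ) 1, bowenEntMeasδ T μ ε δ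

/-- `𝒫^δ(T,d,μ,s,ε) = inf {∑_i P(T,d,Z_i,s,ε) : μ(⋃ Z_i) > 1 - δ}`. -/
noncomputable def packOuterMeas [MeasurableSpace X] (T : X → X) (μ : Measure X) (s : ℝ)
    (ε δ : ℝ) : ℝ≥0∞ :=
  ⨅ (Zs : ℕ → Set X) (_ : 1 - ENNReal.ofReal δ < μ (⋃ i, Zs i)), ∑' i, packCP T (Zs i) s ε

/-- The critical value `𝒫^δ(T,d,μ,ε)`. -/
noncomputable def packEntMeasδ [MeasurableSpace X] (T : X → X) (μ : Measure X)
    (ε δ : ℝ) : ℝ≥0∞ :=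
  sInf {a : ℝ≥0∞ | ∃ s : ℝ, 0 ≤ s ∧ a = ENNReal.ofReal s ∧ packOuterMeas T μ s ε δ = 0}

/-- `𝒫_μ(T,d,ε) = lim_{δ → 0} 𝒫^δ(T,d,μ,ε)`. -/
noncomputable def packEntMeas [MeasurableSpace X] (T : X → X) (μ : Measure X) (ε : ℝ) : ℝ≥0∞ :=
  ⨆ δ ∈ Set.Ioo (0 : ℝ) 1, packEntMeasδ T μ ε δ

/-- The `n`-th empirical measure `(1/n) ∑_{j=0}^{n-1} δ_{T^j x}`. -/
noncomputable def empMeas [MeasurableSpace X] (T : X → X) (x : X) (n : ℕ) : Measure X :=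
  (n : ℝ≥0∞)⁻¹ • ∑ j ∈ Finset.range n, Measure.dirac (T^[j] x)

set_option linter.unusedSectionVars false in
lemma empMeas_finite [MeasurableSpace X] (T : X → X) (x : X) (n : ℕ) :
    IsFiniteMeasure (empMeas T x n) := by
  refine ⟨?_⟩
  have h : (∑ j ∈ Finset.range n, Measure.dirac (T^[j] x)) Set.univ = n := by
    rw [Measure.finset_sum_apply]
    simp
  rw [empMeas, Measure.smul_apply, smul_eq_mul, h]
  rcases eq_or_ne (n : ℝ≥0∞) 0 with h0 | h0
  · simp [h0]
  · rw [ENNReal.inv_mul_cancel h0 (by simp)]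
    exact ENNReal.one_lt_top

/-- The `n`-th empirical measure as a finite measure. -/
noncomputable def empFM [MeasurableSpace X] (T : X → X) (x : X) (n : ℕ) : FiniteMeasure X :=
  ⟨empMeas T x n, empMeas_finite T x n⟩

/-- The set of generic points of `μ`: points whose empirical measures converge weakly to `μ`. -/
def genPts [MeasurableSpace X] [OpensMeasurableSpace X] (T : X → X) (μ : Measure X) [IsFiniteMeasure μ] : Set X :=
  {x | Tendsto (fun n => empFM T x n) atTop (𝓝 (⟨μ, ‹_›⟩ : FiniteMeasure X))}

/-- `X_{n,F}`: points whose `n`-th empirical measure lies in `F`. -/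
def XnF [MeasurableSpace X] [OpensMeasurableSpace X] (T : X → X) (F : Set (FiniteMeasure X)) (n : ℕ) : Set X :=
  {x | empFM T x n ∈ F}

/-- Pfister–Sullivan `ε`-entropy of `μ`. -/
noncomputable def psEnt [MeasurableSpace X] [OpensMeasurableSpace X] (T : X → X) (μ : Measure X) [IsFiniteMeasure μ]
    (ε : ℝ) : ℝ≥0∞ :=
  ⨅ (F : Set (FiniteMeasure X)) (_ : F ∈ @nhds (FiniteMeasure X) _ (⟨μ, ‹_›⟩ : FiniteMeasure X)),
    limsup (fun n => ENNReal.ofReal (Real.log (sepNum T n ε (XnF T F n)) / n)) atTop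

/-- `limsup_{ε → 0⁺} f(ε)/log(1/ε)`. -/
noncomputable def mmUpper (f : ℝ → ℝ≥0∞) : ℝ≥0∞ :=
  limsup (fun ε : ℝ => f ε / ENNReal.ofReal (Real.log (1 / ε))) (𝓝[>] (0 : ℝ))

/-- `liminf_{ε → 0⁺} f(ε)/log(1/ε)`. -/
noncomputable def mmLower (f : ℝ → ℝ≥0∞) : ℝ≥0∞ :=
  liminf (fun ε : ℝ => f ε / ENNReal.ofReal (Real.log (1 / ε))) (𝓝[>] (0 : ℝ))

/-- Bowen upper metric mean dimension of a subset. -/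
noncomputable def mdimBUpper (T : X → X) (Z : Set X) : ℝ≥0∞ :=
  mmUpper (fun ε => bowenEnt T Z ε)

/-- Packing upper metric mean dimension of a subset. -/
noncomputable def mdimPUpper (T : X → X) (Z : Set X) : ℝ≥0∞ :=
  mmUpper (fun ε => packEnt T Z ε)

/-- Packing lower metric mean dimension of a subset. -/
noncomputable def mdimPLower (T : X → X) (Z : Set X) : ℝ≥0∞ :=
  mmLower (fun ε => packEnt T Z ε)

section BKProof

variable {T : X → X}

lemma bowenDist_nonneg (T : X → X) (n : ℕ) (x y : X) : 0 ≤ bowenDist T n x y :=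
  Real.iSup_nonneg fun _ => Real.iSup_nonneg fun _ => dist_nonneg

lemma bowenDist_le {n : ℕ} {x y : X} {c : ℝ} (hc : 0 ≤ c)
    (h : ∀ j < n, dist (T^[j] x) (T^[j] y) ≤ c) : bowenDist T n x y ≤ c :=
  Real.iSup_le (fun j => Real.iSup_le (fun hj => h j (Finset.mem_range.mp hj)) hc) hc

lemma dist_le_bowenDist {n j : ℕ} (hj : j < n) (x y : X) :
    dist (T^[j] x) (T^[j] y) ≤ bowenDist T n x y := by
  have hbdd : BddAbove (Set.range fun j =>
      ⨆ _ : j ∈ Finset.range n, dist (T^[j] x) (T^[j] y)) := by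
    refine ⟨∑ i ∈ Finset.range n, dist (T^[i] x) (T^[i] y), ?_⟩
    rintro r ⟨i, rfl⟩
    exact Real.iSup_le
      (fun hi => Finset.single_le_sum (f := fun i => dist (T^[i] x) (T^[i] y))
        (fun _ _ => dist_nonneg) hi)
      (Finset.sum_nonneg fun _ _ => dist_nonneg)
  have h := le_ciSup hbdd j
  rw [ciSup_pos (Finset.mem_range.mpr hj)] at h
  exact h

lemma bowenDist_zero (T : X → X) (x y : X) : bowenDist T 0 x y = 0 :=
  le_antisymm (bowenDist_le le_rfl fun j hj => absurd hj (Nat.not_lt_zero j))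
    (bowenDist_nonneg T 0 x y)

lemma bowenBall_sub {n : ℕ} {x y : X} {ε : ℝ} (hy : y ∈ bowenBall T n x (ε/2)) :
    bowenBall T n x (ε/2) ⊆ bowenBall T n y ε := by
  intro z hz
  have hy' : bowenDist T n x y < ε/2 := hy
  have hz' : bowenDist T n x z < ε/2 := hz
  have h : bowenDist T n y z ≤ bowenDist T n x y + bowenDist T n x z := by
    refine bowenDist_le (add_nonneg (bowenDist_nonneg T n x y) (bowenDist_nonneg T n x z)) ?_
    intro j hj
    calc dist (T^[j] y) (T^[j] z)
        ≤ dist (T^[j] y) (T^[j] x) + dist (T^[j] x) (T^[j] z) := dist_triangle _ _ _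
      _ ≤ bowenDist T n x y + bowenDist T n x z := by
          rw [dist_comm]
          exact add_le_add (dist_le_bowenDist hj x y) (dist_le_bowenDist hj x z)
  show bowenDist T n y z < ε
  calc bowenDist T n y z ≤ _ := h
    _ < ε/2 + ε/2 := add_lt_add hy' hz'
    _ = ε := by ring

lemma isOpen_bowenBall (hT : Continuous T) {n : ℕ} {x : X} {r : ℝ} (hr : 0 < r) :
    IsOpen (bowenBall T n x r) := by
  have heq : bowenBall T n x r = ⋂ j ∈ Finset.range n, (T^[j]) ⁻¹' Metric.ball (T^[j] x) r := by
    ext y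
    simp only [bowenBall, Set.mem_setOf_eq, Set.mem_iInter, Set.mem_preimage,
      Metric.mem_ball, Finset.mem_range]
    constructor
    · intro h j hj
      rw [dist_comm]
      exact (dist_le_bowenDist hj x y).trans_lt h
    · intro h
      rcases Nat.eq_zero_or_pos n with hn | hn
      · subst hn; rw [bowenDist_zero]; exact hr
      · obtain ⟨j0, hj0, hmax⟩ := Finset.exists_max_image (Finset.range n)
          (fun j => dist (T^[j] x) (T^[j] y)) ⟨0, Finset.mem_range.mpr hn⟩
        refine (bowenDist_le dist_nonneg fun j hj =>
          hmax j (Finset.mem_range.mpr hj)).trans_lt ?_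
        rw [dist_comm]
        exact h j0 (Finset.mem_range.mp hj0)
  rw [heq]
  exact isOpen_biInter_finset fun j _ => Metric.isOpen_ball.preimage (hT.iterate j)

lemma negLog_div_le [MeasurableSpace X] {μ : Measure X} [IsProbabilityMeasure μ] {n : ℕ}
    (hn : 1 ≤ n) {x : X} {ε s' : ℝ} (hs' : 0 ≤ s')
    (h : ENNReal.ofReal (Real.exp (-(s' * n))) ≤ μ (bowenBall T n x ε)) :
    negLogMeas μ (bowenBall T n x ε) / n ≤ ENNReal.ofReal s' := by
  set S := bowenBall T n x ε with hS
  have hpos : 0 < μ S := lt_of_lt_of_le (ENNReal.ofReal_pos.mpr (Real.exp_pos _)) h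
  have htop : μ S ≠ ⊤ := measure_ne_top μ S
  rw [negLogMeas, if_neg hpos.ne']
  have hexp : Real.exp (-(s' * n)) ≤ (μ S).toReal := (ENNReal.ofReal_le_iff_le_toReal htop).mp h
  have hlog : -Real.log (μ S).toReal ≤ s' * n := by
    have h2 := Real.log_le_log (Real.exp_pos _) hexp
    rw [Real.log_exp] at h2
    linarith
  calc ENNReal.ofReal (-Real.log (μ S).toReal) / n
      ≤ ENNReal.ofReal (s' * n) / n := by
        exact ENNReal.div_le_div_right (ENNReal.ofReal_le_ofReal hlog) _
    _ = ENNReal.ofReal s' * n / n := by rw [ENNReal.ofReal_mul hs', ENNReal.ofReal_natCast]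
    _ = ENNReal.ofReal s' := by
        rw [mul_div_assoc, ENNReal.div_self (by exact_mod_cast Nat.one_le_iff_ne_zero.mp hn)
          (ENNReal.natCast_ne_top n), mul_one]

lemma key_aux [MeasurableSpace X] [BorelSpace X] (T : X → X) (hT : Continuous T)
    (μ : Measure X) [IsProbabilityMeasure μ] {ε s' : ℝ} (hε : 0 < ε)
    (has' : bowenEntMeas T μ (ε/2) < ENNReal.ofReal s') {δ : ℝ} (hδ : δ ∈ Set.Ioo (0:ℝ) 1) :
    ∃ G : Set X, MeasurableSet G ∧ 1 - ENNReal.ofReal δ ≤ μ G ∧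
      ∀ x ∈ G, liminf (fun n => negLogMeas μ (bowenBall T n x ε) / n) atTop
        ≤ ENNReal.ofReal s' := by
  classical
  have hδε : bowenEntMeasδ T μ (ε/2) δ < ENNReal.ofReal s' :=
    lt_of_le_of_lt (le_biSup _ hδ) has'
  rw [bowenEntMeasδ] at hδε
  obtain ⟨b, hbmem, hblt⟩ := sInf_lt_iff.mp hδε
  obtain ⟨s, hs0, rfl, hsup⟩ := hbmem
  have hss' : s < s' := (ENNReal.ofReal_lt_ofReal_iff_of_nonneg hs0).mp hblt
  have hs'0 : 0 ≤ s' := hs0.trans hss'.le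
  have hpre : ∀ N, bowenPreMeas T μ s N (ε/2) δ = 0 := by
    intro N
    refine le_antisymm ?_ bot_le
    rw [← hsup]
    exact le_iSup (fun N => bowenPreMeas T μ s N (ε/2) δ) N
  have hI : ∀ N : ℕ, ∃ I : Set (X × ℕ),
      (I.Countable ∧ (∀ p ∈ I, N ≤ p.2) ∧
        1 - ENNReal.ofReal δ < μ (⋃ p ∈ I, bowenBall T p.2 p.1 (ε/2))) ∧
      weightSum s I < 1 := by
    intro N
    have h0 : bowenPreMeas T μ s N (ε/2) δ < 1 := by rw [hpre N]; exact zero_lt_one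
    rw [bowenPreMeas] at h0
    simp only [iInf_lt_iff] at h0
    obtain ⟨I, hP, hw⟩ := h0
    exact ⟨I, hP, hw⟩
  choose I hIP hIw using hI
  set good : X × ℕ → Prop :=
    fun p => ENNReal.ofReal (Real.exp (-(s' * p.2))) ≤ μ (bowenBall T p.2 p.1 (ε/2)) with hgood
  set U' : ℕ → Set X :=
    fun N => ⋃ p ∈ I N, if good p then bowenBall T p.2 p.1 (ε/2) else ∅ with hU'
  have hε2 : 0 < ε/2 := by linarith
  have hU'meas : ∀ N, MeasurableSet (U' N) := by
    intro N
    refine MeasurableSet.biUnion (hIP N).1 fun p _ => ?_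
    split_ifs
    · exact (isOpen_bowenBall hT hε2).measurableSet
    · exact MeasurableSet.empty
  have hbad : ∀ N, μ (⋃ p ∈ I N, if good p then (∅ : Set X) else bowenBall T p.2 p.1 (ε/2))
      ≤ ENNReal.ofReal (Real.exp (-((s' - s) * N))) := by
    intro N
    calc μ (⋃ p ∈ I N, if good p then (∅ : Set X) else bowenBall T p.2 p.1 (ε/2))
        ≤ ∑' p : (I N), μ (if good (p : X × ℕ) then (∅ : Set X)
            else bowenBall T (p : X × ℕ).2 (p : X × ℕ).1 (ε/2)) :=
          measure_biUnion_le μ (hIP N).1 _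
      _ ≤ ∑' p : (I N), ENNReal.ofReal (Real.exp (-((s' - s) * N)))
            * ENNReal.ofReal (Real.exp (-(s * ((p : X × ℕ).2 : ℝ)))) := by
          refine ENNReal.tsum_le_tsum fun p => ?_
          by_cases hg : good (p : X × ℕ)
          · simp [hg]
          · rw [if_neg hg]
            have h1 : μ (bowenBall T (p : X × ℕ).2 (p : X × ℕ).1 (ε/2))
                ≤ ENNReal.ofReal (Real.exp (-(s' * (p : X × ℕ).2))) := (not_le.mp hg).le
            refine h1.trans ?_
            rw [← ENNReal.ofReal_mul (Real.exp_pos _).le, ← Real.exp_add]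
            apply ENNReal.ofReal_le_ofReal
            apply Real.exp_le_exp.mpr
            have hN : (N : ℝ) ≤ ((p : X × ℕ).2 : ℝ) :=
              Nat.cast_le.mpr ((hIP N).2.1 _ p.2)
            nlinarith [mul_le_mul_of_nonneg_left hN (sub_nonneg.mpr hss'.le)]
      _ = ENNReal.ofReal (Real.exp (-((s' - s) * N))) * weightSum s (I N) :=
          ENNReal.tsum_mul_left
      _ ≤ ENNReal.ofReal (Real.exp (-((s' - s) * N))) * 1 :=
          mul_le_mul_right (hIw N).le _
      _ = _ := mul_one _
  have hcov : ∀ N, 1 - ENNReal.ofReal δ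
      < μ (U' N) + ENNReal.ofReal (Real.exp (-((s' - s) * N))) := by
    intro N
    have hsub : (⋃ p ∈ I N, bowenBall T p.2 p.1 (ε/2)) ⊆
        U' N ∪ (⋃ p ∈ I N, if good p then (∅ : Set X) else bowenBall T p.2 p.1 (ε/2)) := by
      intro x hx
      obtain ⟨p, hp, hxp⟩ := Set.mem_iUnion₂.mp hx
      by_cases hg : good p
      · exact Or.inl (Set.mem_biUnion hp (by rwa [if_pos hg]))
      · exact Or.inr (Set.mem_biUnion hp (by rwa [if_neg hg]))
    calc 1 - ENNReal.ofReal δ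
        < μ (⋃ p ∈ I N, bowenBall T p.2 p.1 (ε/2)) := (hIP N).2.2
      _ ≤ μ (U' N ∪ _) := measure_mono hsub
      _ ≤ μ (U' N) + μ (⋃ p ∈ I N, if good p then (∅ : Set X)
            else bowenBall T p.2 p.1 (ε/2)) := measure_union_le _ _
      _ ≤ μ (U' N) + ENNReal.ofReal (Real.exp (-((s' - s) * N))) :=
          add_le_add_right (hbad N) _
  set V : ℕ → Set X := fun M => ⋃ N, ⋃ (_ : M ≤ N), U' N with hV
  have hVmeas : ∀ M, MeasurableSet (V M) := fun M =>
    MeasurableSet.iUnion fun N => MeasurableSet.iUnion fun _ => hU'meas N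
  have hVanti : Antitone V := by
    intro M M' h
    exact Set.iUnion₂_subset fun N hN =>
      Set.subset_iUnion₂ (s := fun N (_ : M ≤ N) => U' N) N (h.trans hN)
  have hexp0 : Tendsto (fun N : ℕ => Real.exp (-((s' - s) * N))) atTop (nhds 0) := by
    apply Real.tendsto_exp_atBot.comp
    rw [tendsto_neg_atBot_iff]
    exact Tendsto.const_mul_atTop (by linarith) tendsto_natCast_atTop_atTop
  have hVμ : ∀ M, 1 - ENNReal.ofReal δ ≤ μ (V M) := by
    intro M
    have h1δ : (1 : ℝ≥0∞) - ENNReal.ofReal δ = ENNReal.ofReal (1 - δ) := by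
      rw [ENNReal.ofReal_sub _ hδ.1.le, ENNReal.ofReal_one]
    rw [h1δ]
    refine le_of_tendsto (x := atTop)
      (f := fun N : ℕ => ENNReal.ofReal ((1 - δ) - Real.exp (-((s' - s) * N)))) ?_ ?_
    · have h2 : Tendsto (fun N : ℕ => (1 - δ) - Real.exp (-((s' - s) * N))) atTop
          (nhds ((1 - δ) - 0)) := Tendsto.const_sub _ hexp0
      rw [sub_zero] at h2
      exact ENNReal.tendsto_ofReal h2
    · filter_upwards [eventually_ge_atTop M] with N hN
      have hUV : μ (U' N) ≤ μ (V M) :=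
        measure_mono (Set.subset_iUnion₂ (s := fun N _ => U' N) N hN)
      refine le_trans ?_ hUV
      rw [ENNReal.ofReal_sub _ (Real.exp_pos _).le, ← h1δ]
      exact tsub_le_iff_right.mpr (hcov N).le
  refine ⟨⋂ M, V M, MeasurableSet.iInter fun M => hVmeas M, ?_, ?_⟩
  · rw [hVanti.directed_ge.measure_iInter (fun M => (hVmeas M).nullMeasurableSet)
      ⟨0, measure_ne_top μ _⟩]
    exact le_iInf hVμ
  · intro x hx
    refine liminf_le_of_frequently_le ?_
    rw [frequently_atTop]
    intro M
    have hxV := Set.mem_iInter.mp hx (max M 1)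
    obtain ⟨N, hMN, hxU⟩ := Set.mem_iUnion₂.mp hxV
    obtain ⟨p, hpI, hxp⟩ := Set.mem_iUnion₂.mp hxU
    by_cases hg : good p
    swap
    · rw [if_neg hg] at hxp; exact absurd hxp (Set.notMem_empty x)
    rw [if_pos hg] at hxp
    have hn : N ≤ p.2 := (hIP N).2.1 p hpI
    have hM1 : max M 1 ≤ p.2 := hMN.trans hn
    refine ⟨p.2, le_trans (le_max_left M 1) hM1, ?_⟩
    have hmeas : ENNReal.ofReal (Real.exp (-(s' * p.2))) ≤ μ (bowenBall T p.2 x ε) :=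
      hg.trans (measure_mono (bowenBall_sub hxp))
    exact negLog_div_le (le_trans (le_max_right M 1) hM1) hs'0 hmeas

end BKProof
/-- `h̲_μ^{BK}(T, ε) ≤ M_μ(T, d, ε/2)` for any Borel probability measure `μ`. -/
theorem stmt_8 {X : Type*} [MetricSpace X] [CompactSpace X] [MeasurableSpace X] [BorelSpace X]
    (T : X → X) (hT : Continuous T) (μ : Measure X) [IsProbabilityMeasure μ]
    (ε : ℝ) (hε : 0 < ε) :
    bkLower T μ ε ≤ bowenEntMeas T μ (ε / 2) := by
  rcases eq_or_ne (bowenEntMeas T μ (ε/2)) ⊤ with htop | htop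
  · rw [htop]; exact le_top
  refine ENNReal.le_of_forall_pos_le_add fun η hη hlt => ?_
  set a := bowenEntMeas T μ (ε/2) with ha
  set s' : ℝ := a.toReal + η with hs'def
  have hs'0 : 0 ≤ s' := add_nonneg ENNReal.toReal_nonneg η.coe_nonneg
  have hofs' : ENNReal.ofReal s' = a + η := by
    rw [hs'def, ENNReal.ofReal_add ENNReal.toReal_nonneg η.coe_nonneg,
      ENNReal.ofReal_toReal htop, ENNReal.ofReal_coe_nnreal]
  have has' : a < ENNReal.ofReal s' := by
    rw [hofs']
    exact ENNReal.lt_add_right htop (by exact_mod_cast hη.ne')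
  rw [← hofs']
  have hδk : ∀ k : ℕ, (1 : ℝ)/(k+2) ∈ Set.Ioo (0:ℝ) 1 := by
    intro k
    constructor
    · positivity
    · rw [div_lt_one (by positivity)]
      have : (0:ℝ) ≤ (k:ℝ) := Nat.cast_nonneg k
      linarith
  have key := fun k : ℕ => key_aux T hT μ hε has' (hδk k)
  choose G hGmeas hGμ hGprop using key
  set Gu : Set X := ⋃ k, G k with hGu
  have hGumeas : MeasurableSet Gu := MeasurableSet.iUnion hGmeas
  have hGu1 : μ Gu = 1 := by
    refine le_antisymm prob_le_one ?_
    refine le_of_tendsto (x := atTop)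
      (f := fun k : ℕ => ENNReal.ofReal (1 - 1/(k+2))) ?_ ?_
    · have h0' : Tendsto (fun k : ℕ => ((k:ℝ)+2)⁻¹) atTop (nhds 0) :=
        tendsto_inv_atTop_zero.comp
          (tendsto_atTop_add_const_right _ 2 tendsto_natCast_atTop_atTop)
      have h0 : Tendsto (fun k : ℕ => (1 : ℝ)/(k+2)) atTop (nhds 0) := by
        simpa [one_div] using h0'
      have h1 : Tendsto (fun k : ℕ => 1 - (1:ℝ)/(k+2)) atTop (nhds (1 - 0)) :=
        Tendsto.const_sub _ h0
      rw [sub_zero] at h1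
      have h3 := ENNReal.tendsto_ofReal h1
      rwa [ENNReal.ofReal_one] at h3
    · filter_upwards with k
      have h2 : ENNReal.ofReal (1 - 1/(k+2)) ≤ μ (G k) := by
        rw [ENNReal.ofReal_sub _ (by positivity : (0:ℝ) ≤ 1/(k+2)), ENNReal.ofReal_one]
        exact hGμ k
      exact h2.trans (measure_mono (Set.subset_iUnion G k))
  have hcompl : μ Guᶜ = 0 := by
    rw [measure_compl hGumeas (measure_ne_top μ _), hGu1, measure_univ, tsub_self]
  have hae : ∀ᵐ x ∂μ, liminf (fun n => negLogMeas μ (bowenBall T n x ε) / n) atTop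
      ≤ ENNReal.ofReal s' := by
    rw [ae_iff]
    refine measure_mono_null ?_ hcompl
    intro x hx
    simp only [Set.mem_setOf_eq] at hx
    intro hxG
    obtain ⟨k, hk⟩ := Set.mem_iUnion.mp hxG
    exact hx (hGprop k x hk)
  calc bkLower T μ ε ≤ ∫⁻ _, ENNReal.ofReal s' ∂μ := lintegral_mono_ae hae
    _ = ENNReal.ofReal s' := by rw [lintegral_const, measure_univ, mul_one]
end

section
/- Let (X,T) be a TDS with metric d and μ a Borel probability measure. Then for every ε > 0, M_μ(T,d,ε/2) ≤ inf{h_top^B(T, Z, d, ε/2) : Z ⊂ X Borel, μ(Z) = 1}, where h_top^B is the Bowen ε-entropy of a subset. -/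
open MeasureTheory Filter Set Metric Topology ENNReal

variable {X : Type*} [MetricSpace X]

/-- `M_μ(T,d,ε/2) ≤ inf {h_top^B(T,Z,d,ε/2) : Z Borel, μ(Z) = 1}`. -/
theorem stmt_9 {X : Type*} [MetricSpace X] [CompactSpace X] [MeasurableSpace X] [BorelSpace X]
    (T : X → X) (hT : Continuous T) (μ : Measure X) [IsProbabilityMeasure μ]
    (ε : ℝ) (hε : 0 < ε) :
    bowenEntMeas T μ (ε / 2) ≤
      ⨅ (Z : Set X) (_ : MeasurableSet Z ∧ μ Z = 1), bowenEnt T Z (ε / 2) := by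
  refine le_iInf₂ fun Z hZ => ?_
  refine iSup₂_le fun δ hδ => ?_
  refine sInf_le_sInf ?_
  rintro a ⟨s, hs, rfl, h0⟩
  refine ⟨s, hs, rfl, le_antisymm ?_ bot_le⟩
  rw [← h0]
  refine iSup_mono fun N => ?_
  refine le_iInf₂ fun I hI => ?_
  refine iInf₂_le I ⟨hI.1, hI.2.1, ?_⟩
  calc 1 - ENNReal.ofReal δ < 1 := ENNReal.sub_lt_self one_ne_top one_ne_zero
        (by simpa using ENNReal.ofReal_pos.2 hδ.1)
    _ = μ Z := hZ.2.symm
    _ ≤ μ (⋃ p ∈ I, bowenBall T p.2 p.1 (ε / 2)) := measure_mono hI.2.2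
end

section
/- Let Z ⊂ X, s ≥ 0, ε > 0, and for an ergodic measure μ let G_{μ,F}^N = {x ∈ G_μ : (1/n)∑_{j=0}^{n-1}δ_{T^j x} ∈ F for all n ≥ N}, where F is a weak*-neighborhood of μ. If 0 < s < t < h_top^P(T, G_{μ,F}^{N_0}, d, ε) for some N_0, then limsup_{n→∞} (1/n) log s_n(T, d, ε, X_{n,F}) ≥ s, where X_{n,F} = {x : (1/n)∑_{j=0}^{n-1}δ_{T^j x} ∈ F}. -/
open MeasureTheory Filter Set Metric Topology ENNReal

variable {X : Type*} [MetricSpace X]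

section Aux

variable {X : Type*} [MetricSpace X]

lemma bowenDist_le_of {T : X → X} {n : ℕ} {x y : X} {c : ℝ} (hc : 0 ≤ c)
    (h : ∀ j, j < n → dist (T^[j] x) (T^[j] y) ≤ c) : bowenDist T n x y ≤ c :=
  Real.iSup_le (fun j => Real.iSup_le (fun hj => h j (Finset.mem_range.mp hj)) hc) hc

lemma mem_own_bowenClosedBall {T : X → X} {n : ℕ} (x : X) {ε : ℝ} (hε : 0 ≤ ε) :
    x ∈ bowenClosedBall T n x ε :=
  bowenDist_le_of hε (fun j _ => by simpa using hε)

/-- In a compact space, `(n,ε)`-separated finsets have bounded cardinality. -/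
lemma sep_card_bound [CompactSpace X] {T : X → X} (hT : Continuous T) (n : ℕ) {ε : ℝ}
    (hε : 0 < ε) : ∃ K : ℕ, ∀ E : Finset X, IsBowenSeparated T n ε ↑E → E.card ≤ K := by
  classical
  have hΦ : Continuous (fun x : X => fun j : Fin n => T^[(j : ℕ)] x) :=
    continuous_pi fun j => hT.iterate _
  have hU := CompactSpace.uniformContinuous_of_continuous hΦ
  rw [Metric.uniformContinuous_iff] at hU
  obtain ⟨δ, hδ, hδ'⟩ := hU ε hε
  obtain ⟨tset, -, htfin, htcov⟩ :=
    finite_cover_balls_of_compact (isCompact_univ (X := X)) (half_pos hδ)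
  refine ⟨htfin.toFinset.card, fun E hE => ?_⟩
  have hchoice : ∀ x : X, ∃ c ∈ htfin.toFinset, x ∈ ball c (δ / 2) := by
    intro x
    have := htcov (Set.mem_univ x)
    simp only [Set.mem_iUnion] at this
    obtain ⟨c, hc, hxc⟩ := this
    exact ⟨c, htfin.mem_toFinset.mpr hc, hxc⟩
  choose f hf1 hf2 using hchoice
  refine Finset.card_le_card_of_injOn f (fun x _ => hf1 x) ?_
  intro x hx y hy hxy
  by_contra hne
  have hsep := hE x hx y hy hne
  have hdxy : dist x y < δ := by
    have h1 := hf2 x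
    have h2 := hf2 y
    rw [hxy] at h1
    calc dist x y ≤ dist x (f y) + dist (f y) y := dist_triangle _ _ _
      _ < δ / 2 + δ / 2 := by
          rw [mem_ball] at h1 h2
          rw [dist_comm (f y) y]
          exact add_lt_add h1 h2
      _ = δ := by ring
  have hpi := hδ' hdxy
  have hb : bowenDist T n x y ≤ dist (fun j : Fin n => T^[(j : ℕ)] x)
      (fun j : Fin n => T^[(j : ℕ)] y) := by
    refine bowenDist_le_of dist_nonneg (fun j hj => ?_)
    exact dist_le_pi_dist (fun i : Fin n => T^[(i : ℕ)] x)
      (fun i : Fin n => T^[(i : ℕ)] y) ⟨j, hj⟩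
  exact absurd (hsep.trans_le hb) (not_lt.mpr hpi.le)

end Aux

/-- if `0 < s < t < h_top^P(T, G_{μ,F}^{N₀}, d, ε)` then
`limsup_n (1/n) log s_n(T,d,ε,X_{n,F}) ≥ s`. -/
theorem stmt_18 {X : Type*} [MetricSpace X] [CompactSpace X] [MeasurableSpace X] [BorelSpace X]
    (T : X → X) (hT : Continuous T) (μ : Measure X) [IsProbabilityMeasure μ]
    (hμ : Ergodic T μ) (F : Set (FiniteMeasure X))
    (hF : F ∈ @nhds (FiniteMeasure X) _ ((⟨μ, inferInstance⟩ : FiniteMeasure X)))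
    (ε s t : ℝ) (hε : 0 < ε) (N₀ : ℕ) (hs : 0 < s) (hst : s < t)
    (ht : ENNReal.ofReal t <
      packEnt T {x ∈ genPts T μ | ∀ n ≥ N₀, empFM T x n ∈ F} ε) :
    ENNReal.ofReal s ≤
      limsup (fun n => ENNReal.ofReal (Real.log (sepNum T n ε (XnF T F n)) / n)) atTop := by
  classical
  set Z : Set X := {x ∈ genPts T μ | ∀ n ≥ N₀, empFM T x n ∈ F} with hZdef
  by_contra hcon
  push_neg at hcon
  -- eventual exponential bound on sepNum
  have hev : ∀ᶠ n : ℕ in atTop,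
      Real.log (sepNum T n ε (XnF T F n)) / n < s := by
    filter_upwards [Filter.eventually_lt_of_limsup_lt hcon] with n hn
    exact (ENNReal.ofReal_lt_ofReal_iff hs).mp hn
  obtain ⟨n₁', hn₁'⟩ := Filter.eventually_atTop.mp hev
  set n₁ : ℕ := max n₁' (max N₀ 1) with hn₁def
  have hbound : ∀ n, n₁ ≤ n → (sepNum T n ε (XnF T F n) : ℝ) ≤ Real.exp (s * n) := by
    intro n hn
    have hn0 : 0 < (n : ℝ) := by
      have : 1 ≤ n := le_trans (le_trans (le_max_right N₀ 1) (le_max_right n₁' _)) hn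
      exact_mod_cast this
    have hlog : Real.log (sepNum T n ε (XnF T F n)) < s * n := by
      have := hn₁' n (le_trans (le_max_left _ _) hn)
      calc Real.log (sepNum T n ε (XnF T F n))
          = Real.log (sepNum T n ε (XnF T F n)) / n * n := by field_simp
        _ < s * n := by exact mul_lt_mul_of_pos_right this hn0
    rcases Nat.eq_zero_or_pos (sepNum T n ε (XnF T F n)) with h0 | hpos
    · rw [h0]; simpa using (Real.exp_nonneg (s * n))
    · have hposR : (0 : ℝ) < (sepNum T n ε (XnF T F n) : ℝ) := by exact_mod_cast hpos
      calc (sepNum T n ε (XnF T F n) : ℝ)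
          = Real.exp (Real.log (sepNum T n ε (XnF T F n))) := (Real.exp_log hposR).symm
        _ ≤ Real.exp (s * n) := Real.exp_le_exp.mpr hlog.le
  -- set up constants
  set u : ℝ := (s + t) / 2 with hudef
  have hsu : s < u := by simp only [hudef]; linarith
  have hut : u < t := by simp only [hudef]; linarith
  set ρ : ℝ≥0∞ := ENNReal.ofReal (Real.exp (u - t)) with hρdef
  have hρ1 : ρ < 1 := by
    rw [hρdef, ← ENNReal.ofReal_one]
    exact ENNReal.ofReal_lt_ofReal_iff_of_nonneg (Real.exp_nonneg _) |>.mpr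
      (by rw [← Real.exp_zero]; exact Real.exp_lt_exp.mpr (by linarith))
  set C : ℝ≥0∞ := (1 - ρ)⁻¹ with hCdef
  have hC : C ≠ ⊤ := by
    rw [hCdef, Ne, ENNReal.inv_eq_top, tsub_eq_zero_iff_le]
    exact not_le.mpr hρ1
  -- key estimate on the packing pre-measure
  have hpack : ∀ N, n₁ ≤ N → packPre T Z t N ε ≤
      ENNReal.ofReal (Real.exp ((s - u) * N)) * C := by
    intro N hN
    rw [packPre]
    refine iSup_le fun I => iSup_le fun hI => ?_
    obtain ⟨hIc, hIZ, hIdisj⟩ := hI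
    set g : ℕ → ℝ≥0∞ := fun n => ENNReal.ofReal (Real.exp (-(t * n))) with hgdef
    set σ : ↥I → ℕ := fun q => (q : X × ℕ).2 with hσdef
    -- per-fiber bound
    have hfib : ∀ n : ℕ, (∑' _ : {q : ↥I // σ q = n}, g n) ≤
        ENNReal.ofReal (Real.exp ((s - u) * N)) * ρ ^ n := by
      intro n
      rcases isEmpty_or_nonempty {q : ↥I // σ q = n} with hemp | hne
      · rw [tsum_empty]; exact zero_le
      · -- n ≥ N
        obtain ⟨q₀⟩ := hne
        have hnN : N ≤ n := by
          have h1 := (hIZ _ q₀.1.2).1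
          have h2 : ((q₀.1 : X × ℕ)).2 = n := q₀.2
          rwa [h2] at h1
        have hnn₁ : n₁ ≤ n := le_trans hN hnN
        have hnN₀ : N₀ ≤ n := le_trans (le_trans (le_max_left N₀ 1) (le_max_right n₁' _)) hnn₁
        -- the centers form a separated subset of XnF T F n
        set Cn : Set X := {x : X | (x, n) ∈ I} with hCndef
        have hsepCn : IsBowenSeparated T n ε Cn := by
          intro x hx y hy hxy
          have hne' : ((x, n) : X × ℕ) ≠ (y, n) :=
            fun h => hxy (congrArg Prod.fst h)
          have hdisj := hIdisj hx hy hne'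
          by_contra hle
          push_neg at hle
          have hx1 : x ∈ bowenClosedBall T n x ε := mem_own_bowenClosedBall x hε.le
          have hy1 : y ∈ bowenClosedBall T n x ε := hle
          have hy2 : y ∈ bowenClosedBall T n y ε := mem_own_bowenClosedBall y hε.le
          exact Set.disjoint_left.mp hdisj hy1 hy2
        obtain ⟨K, hK⟩ := sep_card_bound hT n hε
        have hCnfin : Cn.Finite := by
          by_contra hinf
          obtain ⟨E, hEsub, hEcard⟩ :=
            Set.Infinite.exists_subset_card_eq hinf (K + 1)
          have : E.card ≤ K := hK E (fun a ha b hb hab =>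
            hsepCn a (hEsub ha) b (hEsub hb) hab)
          omega
        have hCnsub : Cn ⊆ XnF T F n := by
          intro x hx
          have hxZ : x ∈ Z := (hIZ _ hx).2
          exact hxZ.2 n hnN₀
        -- card Cn ≤ sepNum
        have hcardCn : Cn.ncard ≤ sepNum T n ε (XnF T F n) := by
          have hmem : Cn.ncard ∈ {k | ∃ E : Finset X, ↑E ⊆ XnF T F n ∧
              IsBowenSeparated T n ε ↑E ∧ E.card = k} := by
            refine ⟨hCnfin.toFinset, ?_, ?_, ?_⟩
            · rw [Set.Finite.coe_toFinset]; exact hCnsub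
            · rw [Set.Finite.coe_toFinset]; exact hsepCn
            · exact (Set.ncard_eq_toFinset_card Cn hCnfin).symm
          have hbdd : BddAbove {k | ∃ E : Finset X, ↑E ⊆ XnF T F n ∧
              IsBowenSeparated T n ε ↑E ∧ E.card = k} := by
            refine ⟨K, fun k hk => ?_⟩
            obtain ⟨E, -, hEsep, rfl⟩ := hk
            exact hK E hEsep
          exact le_csSup hbdd hmem
        -- the fiber injects into Cn
        have hCnfinite : Finite ↥Cn := hCnfin
        set φ : {q : ↥I // σ q = n} → ↥Cn := fun q =>
          ⟨(q.1 : X × ℕ).1, by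
            show ((q.1 : X × ℕ).1, n) ∈ I
            have hq2 : ((q.1 : X × ℕ)).2 = n := q.2
            have h2 : ((q.1 : X × ℕ).1, n) = (q.1 : X × ℕ) := Prod.ext rfl hq2.symm
            rw [h2]; exact q.1.2⟩ with hφdef
        have hφinj : Function.Injective φ := by
          intro a b hab
          have h1 : (a.1 : X × ℕ).1 = (b.1 : X × ℕ).1 := congrArg Subtype.val hab
          have ha2 : ((a.1 : X × ℕ)).2 = n := a.2
          have hb2 : ((b.1 : X × ℕ)).2 = n := b.2
          have h2 : (a.1 : X × ℕ) = (b.1 : X × ℕ) := Prod.ext h1 (ha2.trans hb2.symm)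
          exact Subtype.ext (Subtype.ext h2)
        have hfinfib : Finite {q : ↥I // σ q = n} := Finite.of_injective φ hφinj
        have hcardfib : Nat.card {q : ↥I // σ q = n} ≤ sepNum T n ε (XnF T F n) := by
          have h3 := Nat.card_le_card_of_injective φ hφinj
          rw [Nat.card_coe_set_eq] at h3
          exact le_trans h3 hcardCn
        -- compute the fiber sum
        haveI : Fintype {q : ↥I // σ q = n} := Fintype.ofFinite _
        rw [tsum_fintype, Finset.sum_const, Finset.card_univ]
        have hcardR : (Fintype.card {q : ↥I // σ q = n} : ℝ) ≤ Real.exp (s * n) := by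
          have hcc : (Fintype.card {q : ↥I // σ q = n} : ℝ) ≤
              (sepNum T n ε (XnF T F n) : ℝ) := by
            exact_mod_cast (Nat.card_eq_fintype_card (α := {q : ↥I // σ q = n})) ▸ hcardfib
          exact le_trans hcc (hbound n hnn₁)
        have hcard2 : (Fintype.card {q : ↥I // σ q = n} : ℝ≥0∞) ≤
            ENNReal.ofReal (Real.exp (s * n)) := by
          rw [← ENNReal.ofReal_natCast]
          exact ENNReal.ofReal_le_ofReal hcardR
        calc Fintype.card {q : ↥I // σ q = n} • g n
            = (Fintype.card {q : ↥I // σ q = n} : ℝ≥0∞) * g n := nsmul_eq_mul _ _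
          _ ≤ ENNReal.ofReal (Real.exp (s * n)) * ENNReal.ofReal (Real.exp (-(t * n))) :=
              mul_le_mul' hcard2 le_rfl
          _ = ENNReal.ofReal (Real.exp ((s - u) * n)) * ENNReal.ofReal (Real.exp ((u - t) * n)) := by
              rw [← ENNReal.ofReal_mul (Real.exp_nonneg _),
                ← ENNReal.ofReal_mul (Real.exp_nonneg _), ← Real.exp_add, ← Real.exp_add]
              ring_nf
          _ ≤ ENNReal.ofReal (Real.exp ((s - u) * N)) * ρ ^ n := by
              refine mul_le_mul' (ENNReal.ofReal_le_ofReal (Real.exp_le_exp.mpr ?_)) ?_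
              · have : s - u ≤ 0 := by linarith
                nlinarith [hnN, (by exact_mod_cast hnN : (N : ℝ) ≤ n)]
              · rw [hρdef, ← ENNReal.ofReal_pow (Real.exp_nonneg _), ← Real.exp_nat_mul]
                exact ENNReal.ofReal_le_ofReal (Real.exp_le_exp.mpr (by ring_nf; exact le_rfl))
    -- assemble
    have hws : weightSum t I = ∑' q : ↥I, g (σ q) := by
      rw [weightSum]
    calc weightSum t I = ∑' q : ↥I, g (σ q) := hws
      _ = ∑' p : (Σ n : ℕ, {q : ↥I // σ q = n}), g p.1 := by
          rw [← (Equiv.sigmaFiberEquiv σ).tsum_eq (fun q : ↥I => g (σ q))]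
          refine tsum_congr fun p => ?_
          simp only [Equiv.sigmaFiberEquiv]
          exact congrArg g p.2.2
      _ = ∑' n : ℕ, ∑' _ : {q : ↥I // σ q = n}, g n := ENNReal.tsum_sigma' _
      _ ≤ ∑' n : ℕ, ENNReal.ofReal (Real.exp ((s - u) * N)) * ρ ^ n :=
          ENNReal.tsum_le_tsum hfib
      _ = ENNReal.ofReal (Real.exp ((s - u) * N)) * C := by
          rw [ENNReal.tsum_mul_left, ENNReal.tsum_geometric]
  -- conclude packCP = 0
  have hB : Tendsto (fun N : ℕ => ENNReal.ofReal (Real.exp ((s - u) * N)) * C)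
      atTop (𝓝 0) := by
    have h1 : (fun N : ℕ => ENNReal.ofReal (Real.exp ((s - u) * N))) =
        fun N : ℕ => (ENNReal.ofReal (Real.exp (s - u))) ^ N := by
      funext N
      rw [← ENNReal.ofReal_pow (Real.exp_nonneg _), ← Real.exp_nat_mul, mul_comm]
    have h2 : ENNReal.ofReal (Real.exp (s - u)) < 1 := by
      rw [← ENNReal.ofReal_one]
      exact ENNReal.ofReal_lt_ofReal_iff_of_nonneg (Real.exp_nonneg _) |>.mpr
        (by rw [← Real.exp_zero]; exact Real.exp_lt_exp.mpr (by linarith))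
    have h3 := ENNReal.Tendsto.mul_const
      (ENNReal.tendsto_pow_atTop_nhds_zero_of_lt_one h2) (Or.inr hC)
    rw [zero_mul] at h3
    refine Filter.Tendsto.congr (fun N => ?_) h3
    rw [← ENNReal.ofReal_pow (Real.exp_nonneg _), ← Real.exp_nat_mul,
      mul_comm ((N : ℕ) : ℝ) (s - u)]
  have hCP : packCP T Z t ε = 0 := by
    refine le_antisymm ?_ zero_le
    refine ge_of_tendsto hB ?_
    filter_upwards [Filter.eventually_ge_atTop n₁] with N hN
    exact le_trans (iInf_le _ N) (hpack N hN)
  have hPO : packOuter T Z t ε = 0 := by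
    refine le_antisymm ?_ zero_le
    have h1 : packOuter T Z t ε ≤ ∑' _ : ℕ, packCP T Z t ε := by
      rw [packOuter]
      have hcov : Z ⊆ ⋃ _ : ℕ, Z := fun x hx => Set.mem_iUnion.mpr ⟨0, hx⟩
      exact le_trans (iInf_le _ (fun _ => Z)) (iInf_le _ hcov)
    rw [hCP, tsum_zero] at h1
    exact h1
  have hle : packEnt T Z ε ≤ ENNReal.ofReal t :=
    sInf_le ⟨t, by linarith, rfl, hPO⟩
  rw [hZdef] at hle
  exact absurd (ht.trans_le hle) (lt_irrefl _)
end
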